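/- arXiv:1111.0096 — 5 statements merged into one kernel-verified Lean document; each statement's English description precedes it below -/
import Mathlib

section
/- Let f and f_j (j ∈ ℕ) be complex-valued functions in L¹(ℝ; dλ), and suppose there exists M > 0 such that ‖f_j‖_{L¹(ℝ;dλ)} ≤ M for all j ∈ ℕ. If for every polynomial P(X,Y) in two variables with complex coefficients one has lim_{j→∞} ∫_ℝ f_j(λ) P((λ+i)⁻¹, (λ−i)⁻¹) dλ = ∫_ℝ f(λ) P((λ+i)⁻¹, (λ−i)⁻¹) dλ, then for every continuous function g : ℝ → ℂ vanishing at infinity, lim_{j→∞} ∫_ℝ f_j(λ) g(λ) dλ = ∫_ℝ f(λ) g(λ) dλ. -/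
open MeasureTheory Filter Complex Topology

lemma aux_ne (l : ℝ) : ((l : ℂ) + I) ≠ 0 := by
  intro h
  simpa using congrArg Complex.im h

lemma aux_dense (g : ℝ → ℂ) (hg : Continuous g) (hg0 : Tendsto g (cocompact ℝ) (𝓝 0))
    {δ : ℝ} (hδ : 0 < δ) :
    ∃ P : MvPolynomial (Fin 2) ℂ, ∃ C : ℝ,
      (∀ l : ℝ, ‖g l - MvPolynomial.eval ![((l : ℂ) + I)⁻¹, ((l : ℂ) - I)⁻¹] P‖ ≤ δ) ∧
      Continuous (fun l : ℝ => MvPolynomial.eval ![((l : ℂ) + I)⁻¹, ((l : ℂ) - I)⁻¹] P) ∧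
      (∀ l : ℝ, ‖MvPolynomial.eval ![((l : ℂ) + I)⁻¹, ((l : ℂ) - I)⁻¹] P‖ ≤ C) := by
  -- the basic function r
  have hrc : Continuous (fun l : ℝ => ((l : ℂ) + I)⁻¹) :=
    ((Complex.continuous_ofReal.add continuous_const)).inv₀ aux_ne
  have hiso : Isometry (fun l : ℝ => ((l : ℂ) + I)) := by
    intro x y
    simp [edist_dist, Complex.dist_eq, Complex.dist_eq, add_sub_add_right_eq_sub,
      ← Complex.ofReal_sub, Complex.norm_real, Real.dist_eq]
  have hr0 : Tendsto (fun l : ℝ => ((l : ℂ) + I)⁻¹) (cocompact ℝ) (𝓝 0) := by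
    have h1 : Tendsto (fun l : ℝ => ((l : ℂ) + I)) (cocompact ℝ) (cocompact ℂ) :=
      hiso.isClosedEmbedding.tendsto_cocompact
    have h2 : Tendsto (Inv.inv : ℂ → ℂ) (cocompact ℂ) (𝓝 0) := by
      rw [← Metric.cobounded_eq_cocompact]
      exact tendsto_inv₀_cobounded
    exact h2.comp h1
  -- extensions to the one-point compactification
  let r : C(OnePoint ℝ, ℂ) :=
    OnePoint.continuousMapMk ⟨_, hrc⟩ 0 (by rwa [coclosedCompact_eq_cocompact])
  let G : C(OnePoint ℝ, ℂ) :=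
    OnePoint.continuousMapMk ⟨g, hg⟩ 0 (by rwa [coclosedCompact_eq_cocompact])
  have hr_coe : ∀ l : ℝ, r (l : OnePoint ℝ) = ((l : ℂ) + I)⁻¹ := fun l => rfl
  have hG_coe : ∀ l : ℝ, G (l : OnePoint ℝ) = g l := fun l => rfl
  -- the star subalgebra generated by r
  let A : StarSubalgebra ℂ C(OnePoint ℝ, ℂ) := StarAlgebra.adjoin ℂ {r}
  have hinj : Function.Injective (r : OnePoint ℝ → ℂ) := by
    intro x y h
    have h0 : r (OnePoint.infty : OnePoint ℝ) = 0 := rfl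
    induction x using OnePoint.rec with
    | infty =>
      induction y using OnePoint.rec with
      | infty => rfl
      | coe b =>
        exact absurd (h0 ▸ h).symm (by rw [hr_coe b]; exact inv_ne_zero (aux_ne b))
    | coe a =>
      induction y using OnePoint.rec with
      | infty =>
        exact absurd (h0 ▸ h) (by rw [hr_coe a]; exact inv_ne_zero (aux_ne a))
      | coe b =>
        rw [hr_coe a, hr_coe b] at h
        have hab : (a : ℂ) = b := add_right_cancel (inv_injective h)
        norm_cast at hab
        rw [hab]
  have hA : A.SeparatesPoints := by
    intro x y hxy
    exact ⟨_, ⟨r, StarAlgebra.self_mem_adjoin_singleton ℂ r, rfl⟩,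
      fun h => hxy (hinj h)⟩
  have hclosure : A.topologicalClosure = ⊤ :=
    ContinuousMap.starSubalgebra_topologicalClosure_eq_top_of_separatesPoints A hA
  -- G is within δ of some φ ∈ A
  have hGmem : G ∈ closure (A : Set C(OnePoint ℝ, ℂ)) := by
    have : G ∈ A.topologicalClosure := by rw [hclosure]; trivial
    exact this
  obtain ⟨φ, hφA, hφd⟩ := Metric.mem_closure_iff.mp hGmem δ hδ
  -- φ is a polynomial in r and star r
  let Φ : MvPolynomial (Fin 2) ℂ →ₐ[ℂ] C(OnePoint ℝ, ℂ) := MvPolynomial.aeval ![r, star r]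
  have hrange : A.toSubalgebra ≤ Φ.range := by
    rw [StarAlgebra.adjoin_toSubalgebra]
    apply Algebra.adjoin_le
    rw [Set.star_singleton]
    rintro x (rfl | rfl)
    · exact ⟨MvPolynomial.X 0, by simp [Φ]⟩
    · exact ⟨MvPolynomial.X 1, by simp [Φ]⟩
  have hpt : ∀ (P : MvPolynomial (Fin 2) ℂ) (l : ℝ),
      (Φ P) (l : OnePoint ℝ) =
        MvPolynomial.eval ![((l : ℂ) + I)⁻¹, ((l : ℂ) - I)⁻¹] P := by
    intro P l
    have hstar : (star r) (l : OnePoint ℝ) = ((l : ℂ) - I)⁻¹ := by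
      have h1 : (star r) (l : OnePoint ℝ) = star (r (l : OnePoint ℝ)) := rfl
      rw [h1, hr_coe l, star_inv₀]
      congr 1
      simp [Complex.ext_iff]
    induction P using MvPolynomial.induction_on with
    | C a => simp [Φ]
    | add p q hp hq =>
      rw [map_add, map_add, ContinuousMap.add_apply, hp, hq]
    | mul_X p i hp =>
      rw [map_mul, map_mul, ContinuousMap.mul_apply, hp, MvPolynomial.eval_X]
      congr 1
      show (MvPolynomial.aeval ![r, star r] (MvPolynomial.X i)) (l : OnePoint ℝ) = _
      rw [MvPolynomial.aeval_X]
      fin_cases i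
      · simpa using hr_coe l
      · simpa using hstar
  obtain ⟨P, rfl⟩ := hrange hφA
  refine ⟨P, ‖Φ P‖, ?_, ?_, ?_⟩
  · intro l
    rw [← hpt P l, ← hG_coe l]
    have hd := ContinuousMap.dist_apply_le_dist (f := G) (g := Φ P) (l : OnePoint ℝ)
    rw [dist_eq_norm] at hd
    exact le_trans hd (le_of_lt hφd)
  · have heq : (fun l : ℝ => MvPolynomial.eval ![((l : ℂ) + I)⁻¹, ((l : ℂ) - I)⁻¹] P)
        = fun l : ℝ => (Φ P) (l : OnePoint ℝ) := by
      funext l; rw [hpt P l]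
    rw [heq]
    exact (Φ P).continuous.comp OnePoint.continuous_coe
  · intro l
    rw [← hpt P l]
    exact ContinuousMap.norm_coe_le_norm _ _

/-- Lemma 3.4: if `∫ fⱼ P((λ+i)⁻¹,(λ−i)⁻¹) → ∫ f P((λ+i)⁻¹,(λ−i)⁻¹)` for all two-variable
polynomials `P`, and the `L¹` norms of the `fⱼ` are uniformly bounded,
then `∫ fⱼ g → ∫ f g` for all continuous `g` vanishing at infinity. -/
theorem weak_convergence_from_polynomial_moments
    (f : ℝ → ℂ) (fj : ℕ → ℝ → ℂ)
    (hf : Integrable f) (hfj : ∀ j, Integrable (fj j))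
    (M : ℝ) (hM : 0 < M)
    (hbound : ∀ j, (∫ l : ℝ, ‖fj j l‖) ≤ M)
    (hP : ∀ P : MvPolynomial (Fin 2) ℂ,
      Tendsto (fun j => ∫ l : ℝ,
          fj j l * MvPolynomial.eval ![((l : ℂ) + I)⁻¹, ((l : ℂ) - I)⁻¹] P)
        atTop
        (𝓝 (∫ l : ℝ,
          f l * MvPolynomial.eval ![((l : ℂ) + I)⁻¹, ((l : ℂ) - I)⁻¹] P)))
    (g : ℝ → ℂ) (hg : Continuous g) (hg0 : Tendsto g (cocompact ℝ) (𝓝 0)) :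
    Tendsto (fun j => ∫ l : ℝ, fj j l * g l) atTop (𝓝 (∫ l : ℝ, f l * g l)) := by
  rw [Metric.tendsto_nhds]
  intro ε hε
  set B : ℝ := max M (∫ l : ℝ, ‖f l‖) + 1 with hBdef
  have hMB : M ≤ B - 1 := by
    simp only [hBdef, add_sub_cancel_right]
    exact le_max_left _ _
  have hfB : (∫ l : ℝ, ‖f l‖) ≤ B - 1 := by
    simp only [hBdef, add_sub_cancel_right]
    exact le_max_right _ _
  have hB0 : 0 < B := by
    have := le_max_left M (∫ l : ℝ, ‖f l‖)
    simp only [hBdef]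
    nlinarith
  set δ : ℝ := ε / (3 * B) with hδdef
  have hδ0 : 0 < δ := by positivity
  obtain ⟨P, C, happrox, hcont, hCbd⟩ := aux_dense g hg hg0 hδ0
  set p : ℝ → ℂ := fun l => MvPolynomial.eval ![((l : ℂ) + I)⁻¹, ((l : ℂ) - I)⁻¹] P with hpdef
  have hgbd : ∀ l, ‖g l‖ ≤ δ + C := by
    intro l
    calc ‖g l‖ = ‖(g l - p l) + p l‖ := by ring_nf
      _ ≤ ‖g l - p l‖ + ‖p l‖ := norm_add_le _ _
      _ ≤ δ + C := add_le_add (happrox l) (hCbd l)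
  have hintg : ∀ h : ℝ → ℂ, Integrable h → Integrable (fun l => h l * g l) := by
    intro h hh
    have := hh.bdd_mul hg.aestronglyMeasurable (Eventually.of_forall hgbd)
    simpa [mul_comm] using this
  have hintp : ∀ h : ℝ → ℂ, Integrable h → Integrable (fun l => h l * p l) := by
    intro h hh
    have := hh.bdd_mul hcont.aestronglyMeasurable (Eventually.of_forall hCbd)
    simpa [mul_comm] using this
  -- key estimate
  have key : ∀ h : ℝ → ℂ, Integrable h →
      ‖(∫ l : ℝ, h l * g l) - (∫ l : ℝ, h l * p l)‖ ≤ (∫ l : ℝ, ‖h l‖) * δ := by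
    intro h hh
    rw [← integral_sub (hintg h hh) (hintp h hh)]
    have heq : (fun l : ℝ => h l * g l - h l * p l) = fun l : ℝ => h l * (g l - p l) := by
      funext l; ring
    rw [heq, ← integral_mul_const]
    apply norm_integral_le_of_norm_le (hh.norm.mul_const δ)
    filter_upwards with l
    rw [norm_mul]
    exact mul_le_mul_of_nonneg_left (happrox l) (norm_nonneg _)
  have h3 : ∀ᶠ j in atTop,
      dist (∫ l : ℝ, fj j l * p l) (∫ l : ℝ, f l * p l) < ε / 3 :=
    Metric.tendsto_nhds.mp (hP P) (ε / 3) (by positivity)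
  filter_upwards [h3] with j hj
  have hδB : δ * B = ε / 3 := by
    field_simp [hδdef]
    rw [hδdef]; field_simp [hB0.ne']
  have e1 : ‖(∫ l : ℝ, fj j l * g l) - (∫ l : ℝ, fj j l * p l)‖ < ε / 3 := by
    calc ‖(∫ l : ℝ, fj j l * g l) - (∫ l : ℝ, fj j l * p l)‖
        ≤ (∫ l : ℝ, ‖fj j l‖) * δ := key _ (hfj j)
      _ ≤ M * δ := mul_le_mul_of_nonneg_right (hbound j) (le_of_lt hδ0)
      _ < B * δ := by nlinarith
      _ = ε / 3 := by rw [mul_comm]; exact hδB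
  have e2 : ‖(∫ l : ℝ, f l * g l) - (∫ l : ℝ, f l * p l)‖ < ε / 3 := by
    calc ‖(∫ l : ℝ, f l * g l) - (∫ l : ℝ, f l * p l)‖
        ≤ (∫ l : ℝ, ‖f l‖) * δ := key _ hf
      _ < B * δ := by nlinarith
      _ = ε / 3 := by rw [mul_comm]; exact hδB
  calc dist (∫ l : ℝ, fj j l * g l) (∫ l : ℝ, f l * g l)
      ≤ dist (∫ l : ℝ, fj j l * g l) (∫ l : ℝ, fj j l * p l)
        + dist (∫ l : ℝ, fj j l * p l) (∫ l : ℝ, f l * p l)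
        + dist (∫ l : ℝ, f l * p l) (∫ l : ℝ, f l * g l) := dist_triangle4 _ _ _ _
    _ < ε / 3 + ε / 3 + ε / 3 := by
        apply add_lt_add (add_lt_add _ hj) _
        · rw [dist_eq_norm]; exact e1
        · rw [dist_eq_norm, norm_sub_rev]; exact e2
    _ = ε := by ring
end

section
/- The linear span of the family of functions λ ↦ (λ+i)^{−m}(λ−i)^{−n} on ℝ, where m and n range over nonnegative integers with m+n ≥ 1, is dense with respect to the supremum norm in the space C_∞(ℝ) of continuous complex-valued functions on ℝ vanishing at infinity. -/
open Filter Complex Topology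

namespace SpanResolventAux

/-- The generating set. -/
def genSet : Set (ℝ → ℂ) :=
  {h : ℝ → ℂ | ∃ m n : ℕ, 1 ≤ m + n ∧
    h = fun l : ℝ => (((l : ℂ) + I)⁻¹) ^ m * (((l : ℂ) - I)⁻¹) ^ n}

lemma add_I_ne_zero (l : ℝ) : (l : ℂ) + I ≠ 0 := by
  intro h
  have := congrArg Complex.im h
  simp at this

lemma mul_mem_span {f g : ℝ → ℂ} (hf : f ∈ Submodule.span ℂ genSet)
    (hg : g ∈ Submodule.span ℂ genSet) : f * g ∈ Submodule.span ℂ genSet := by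
  induction hf using Submodule.span_induction with
  | mem x hx =>
    induction hg using Submodule.span_induction with
    | mem y hy =>
      obtain ⟨m₁, n₁, hmn₁, rfl⟩ := hx
      obtain ⟨m₂, n₂, hmn₂, rfl⟩ := hy
      refine Submodule.subset_span ⟨m₁ + m₂, n₁ + n₂, by omega, ?_⟩
      funext l
      simp only [Pi.mul_apply]
      ring
    | zero => simpa using Submodule.zero_mem _
    | add y z _ _ hy hz =>
      have : x * (y + z) = x * y + x * z := mul_add x y z
      rw [this]; exact Submodule.add_mem _ hy hz
    | smul c y _ hy =>
      have : x * (c • y) = c • (x * y) := mul_smul_comm c x y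
      rw [this]; exact Submodule.smul_mem _ _ hy
  | zero => simpa using Submodule.zero_mem _
  | add y z _ _ hy hz =>
    have : (y + z) * g = y * g + z * g := add_mul y z g
    rw [this]; exact Submodule.add_mem _ hy hz
  | smul c y _ hy =>
    have : (c • y) * g = c • (y * g) := smul_mul_assoc c y g
    rw [this]; exact Submodule.smul_mem _ _ hy

lemma star_mem_span {f : ℝ → ℂ} (hf : f ∈ Submodule.span ℂ genSet) :
    (fun l : ℝ => (starRingEnd ℂ) (f l)) ∈ Submodule.span ℂ genSet := by
  induction hf using Submodule.span_induction with
  | mem x hx =>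
    obtain ⟨m, n, hmn, rfl⟩ := hx
    refine Submodule.subset_span ⟨n, m, by omega, ?_⟩
    funext l
    simp only [map_mul, map_pow, map_inv₀, map_add, map_sub, Complex.conj_ofReal,
      Complex.conj_I]
    ring_nf
  | zero =>
    have : (fun l : ℝ => (starRingEnd ℂ) ((0 : ℝ → ℂ) l)) = 0 := by funext l; simp
    rw [this]; exact Submodule.zero_mem _
  | add y z _ _ hy hz =>
    have : (fun l : ℝ => (starRingEnd ℂ) ((y + z) l))
        = (fun l : ℝ => (starRingEnd ℂ) (y l)) + fun l : ℝ => (starRingEnd ℂ) (z l) := by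
      funext l; simp
    rw [this]; exact Submodule.add_mem _ hy hz
  | smul c y _ hy =>
    have : (fun l : ℝ => (starRingEnd ℂ) ((c • y) l))
        = (starRingEnd ℂ c) • fun l : ℝ => (starRingEnd ℂ) (y l) := by
      funext l; simp
    rw [this]; exact Submodule.smul_mem _ _ hy

end SpanResolventAux

open SpanResolventAux OnePoint

/-- The linear span of the functions `λ ↦ (λ+i)⁻ᵐ (λ−i)⁻ⁿ`, `m + n ≥ 1`, is dense in the
sup norm in the space of continuous functions `ℝ → ℂ` vanishing at infinity. -/
theorem span_resolvent_powers_dense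
    (g : ℝ → ℂ) (hg : Continuous g) (hg0 : Tendsto g (cocompact ℝ) (𝓝 0))
    (ε : ℝ) (hε : 0 < ε) :
    ∃ h ∈ Submodule.span ℂ
        {h : ℝ → ℂ | ∃ m n : ℕ, 1 ≤ m + n ∧
          h = fun l : ℝ => (((l : ℂ) + I)⁻¹) ^ m * (((l : ℂ) - I)⁻¹) ^ n},
      ∀ l : ℝ, ‖g l - h l‖ ≤ ε := by
  -- the basic resolvent function, extended to the one-point compactification
  have hcont : Continuous fun l : ℝ => ((l : ℂ) + I)⁻¹ :=
    (Complex.continuous_ofReal.add continuous_const).inv₀ add_I_ne_zero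
  have hnorm : Tendsto (fun l : ℝ => ‖(l : ℂ) + I‖) (cocompact ℝ) atTop := by
    refine tendsto_atTop_mono (fun l => ?_) tendsto_norm_cocompact_atTop
    have h1 : |((l : ℂ) + I).re| ≤ ‖(l : ℂ) + I‖ := Complex.abs_re_le_norm _
    simpa [Real.norm_eq_abs] using h1
  have htend : Tendsto (fun l : ℝ => ((l : ℂ) + I)⁻¹) (coclosedCompact ℝ) (𝓝 0) := by
    rw [Filter.coclosedCompact_eq_cocompact, tendsto_zero_iff_norm_tendsto_zero]
    simp only [norm_inv]
    exact hnorm.inv_tendsto_atTop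
  set u : C(OnePoint ℝ, ℂ) :=
    OnePoint.continuousMapMk ⟨fun l : ℝ => ((l : ℂ) + I)⁻¹, hcont⟩ 0 htend with hu
  have hu_coe : ∀ l : ℝ, u l = ((l : ℂ) + I)⁻¹ := fun l => rfl
  have hu_infty : u ∞ = 0 := rfl
  -- the extension of `g`
  set G : C(OnePoint ℝ, ℂ) :=
    OnePoint.continuousMapMk ⟨g, hg⟩ 0 (by rwa [Filter.coclosedCompact_eq_cocompact]) with hG
  have hG_coe : ∀ l : ℝ, G l = g l := fun l => rfl
  have hG_infty : G ∞ = 0 := rfl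
  -- Stone–Weierstrass on the one-point compactification
  set A : StarSubalgebra ℂ C(OnePoint ℝ, ℂ) := StarAlgebra.adjoin ℂ {u} with hA
  have hsep : A.SeparatesPoints := by
    intro x y hxy
    refine ⟨_, ⟨u, StarAlgebra.subset_adjoin ℂ {u} rfl, rfl⟩, ?_⟩
    induction x with
    | infty =>
      induction y with
      | infty => exact absurd rfl hxy
      | coe l =>
        simp only [hu_infty, hu_coe]
        exact fun h => inv_ne_zero (add_I_ne_zero l) h.symm
    | coe l =>
      induction y with
      | infty =>
        simp only [hu_infty, hu_coe]
        exact inv_ne_zero (add_I_ne_zero l)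
      | coe l' =>
        simp only [hu_coe]
        intro h
        apply hxy
        have : (l : ℂ) + I = (l' : ℂ) + I := inv_injective h
        have : (l : ℂ) = (l' : ℂ) := by linear_combination this
        rw [Complex.ofReal_inj.mp this]
  have htop : A.topologicalClosure = ⊤ :=
    ContinuousMap.starSubalgebra_topologicalClosure_eq_top_of_separatesPoints A hsep
  have hGmem : G ∈ closure (A : Set C(OnePoint ℝ, ℂ)) := by
    have : G ∈ A.topologicalClosure := htop ▸ StarSubalgebra.mem_top
    exact this
  have key : ∀ p ∈ A, (fun l : ℝ => p l - p ∞) ∈ Submodule.span ℂ genSet := by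
    intro p hpA
    induction hpA using StarAlgebra.adjoin_induction with
    | mem q hq =>
      rw [Set.mem_singleton_iff] at hq
      subst hq
      refine Submodule.subset_span ⟨1, 0, by omega, ?_⟩
      funext l
      simp [hu_coe, hu_infty]
    | algebraMap c =>
      have : (fun l : ℝ => (algebraMap ℂ C(OnePoint ℝ, ℂ) c) l
          - (algebraMap ℂ C(OnePoint ℝ, ℂ) c) ∞) = 0 := by
        funext l; simp [Algebra.algebraMap_eq_smul_one]
      rw [this]; exact Submodule.zero_mem _
    | add q r hq' hr' hq hr =>
      have : (fun l : ℝ => (q + r) l - (q + r) ∞)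
          = (fun l : ℝ => q l - q ∞) + fun l : ℝ => r l - r ∞ := by
        funext l; simp [ContinuousMap.add_apply]; ring
      rw [this]; exact Submodule.add_mem _ hq hr
    | mul q r hq' hr' hq hr =>
      have : (fun l : ℝ => (q * r) l - (q * r) ∞)
          = (fun l : ℝ => q l - q ∞) * (fun l : ℝ => r l - r ∞)
            + q ∞ • (fun l : ℝ => r l - r ∞) + r ∞ • fun l : ℝ => q l - q ∞ := by
        funext l
        simp only [ContinuousMap.mul_apply, Pi.add_apply, Pi.mul_apply, Pi.smul_apply,
          smul_eq_mul]
        ring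
      rw [this]
      exact Submodule.add_mem _
        (Submodule.add_mem _ (mul_mem_span hq hr) (Submodule.smul_mem _ _ hr))
        (Submodule.smul_mem _ _ hq)
    | star q hq' hq =>
      have : (fun l : ℝ => (star q) l - (star q) ∞)
          = fun l : ℝ => (starRingEnd ℂ) (q l - q ∞) := by
        funext l
        simp [ContinuousMap.star_apply, Complex.star_def]
      rw [this]
      have := star_mem_span hq
      simpa [map_sub] using this
  obtain ⟨p, hpA, hp⟩ := Metric.mem_closure_iff.mp hGmem (ε / 2) (by linarith)
  refine ⟨fun l : ℝ => p l - p ∞, key p hpA, ?_⟩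
  · intro l
    have h1 : dist (G l) (p l) ≤ dist G p := ContinuousMap.dist_apply_le_dist _
    have h2 : dist (G ∞) (p ∞) ≤ dist G p := ContinuousMap.dist_apply_le_dist _
    have heq : g l - (p l - p ∞) = (G l - p l) - (G ∞ - p ∞) := by
      rw [hG_coe, hG_infty]; ring
    rw [heq]
    calc ‖(G l - p l) - (G ∞ - p ∞)‖ ≤ ‖G l - p l‖ + ‖G ∞ - p ∞‖ := norm_sub_le _ _
      _ = dist (G l) (p l) + dist (G ∞) (p ∞) := by rw [dist_eq_norm, dist_eq_norm]
      _ ≤ dist G p + dist G p := add_le_add h1 h2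
      _ ≤ ε := by linarith
end

section
/- Assume the moment condition stated in the context. Then for every bounded continuous function f : ℝ → ℂ, lim_{j→∞} ∫_ℝ ξ_j(λ) f(λ) (λ²+1)⁻¹ dλ = ∫_ℝ ξ(λ) f(λ) (λ²+1)⁻¹ dλ. -/
open MeasureTheory Filter Complex Topology

/-- The moment condition supplied by Lemma 3.3 of the paper for the positive and negative
parts `ξ_{j,±}`, `ξ_±` of the spectral shift functions: all are nonnegative measurable
functions whose `(λ²+1)⁻¹`-weighted integrals are finite, and all weighted moments against
powers `(λ±i)⁻ⁿ` converge as `j → ∞`. -/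
def MomentCondition (ξp ξm : ℝ → ℝ) (ξjp ξjm : ℕ → ℝ → ℝ) : Prop :=
  Measurable ξp ∧ Measurable ξm ∧ (∀ j, Measurable (ξjp j)) ∧ (∀ j, Measurable (ξjm j)) ∧
  (∀ l, 0 ≤ ξp l) ∧ (∀ l, 0 ≤ ξm l) ∧
  (∀ j l, 0 ≤ ξjp j l) ∧ (∀ j l, 0 ≤ ξjm j l) ∧
  Integrable (fun l : ℝ => ξp l / (l ^ 2 + 1)) ∧
  Integrable (fun l : ℝ => ξm l / (l ^ 2 + 1)) ∧
  (∀ j, Integrable (fun l : ℝ => ξjp j l / (l ^ 2 + 1))) ∧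
  (∀ j, Integrable (fun l : ℝ => ξjm j l / (l ^ 2 + 1))) ∧
  (∀ n : ℕ,
    Tendsto (fun j => ∫ l : ℝ, (ξjp j l : ℂ) * ((l : ℂ) ^ 2 + 1)⁻¹ * (((l : ℂ) + I)⁻¹) ^ n)
      atTop (𝓝 (∫ l : ℝ, (ξp l : ℂ) * ((l : ℂ) ^ 2 + 1)⁻¹ * (((l : ℂ) + I)⁻¹) ^ n)) ∧
    Tendsto (fun j => ∫ l : ℝ, (ξjp j l : ℂ) * ((l : ℂ) ^ 2 + 1)⁻¹ * (((l : ℂ) - I)⁻¹) ^ n)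
      atTop (𝓝 (∫ l : ℝ, (ξp l : ℂ) * ((l : ℂ) ^ 2 + 1)⁻¹ * (((l : ℂ) - I)⁻¹) ^ n)) ∧
    Tendsto (fun j => ∫ l : ℝ, (ξjm j l : ℂ) * ((l : ℂ) ^ 2 + 1)⁻¹ * (((l : ℂ) + I)⁻¹) ^ n)
      atTop (𝓝 (∫ l : ℝ, (ξm l : ℂ) * ((l : ℂ) ^ 2 + 1)⁻¹ * (((l : ℂ) + I)⁻¹) ^ n)) ∧
    Tendsto (fun j => ∫ l : ℝ, (ξjm j l : ℂ) * ((l : ℂ) ^ 2 + 1)⁻¹ * (((l : ℂ) - I)⁻¹) ^ n)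
      atTop (𝓝 (∫ l : ℝ, (ξm l : ℂ) * ((l : ℂ) ^ 2 + 1)⁻¹ * (((l : ℂ) - I)⁻¹) ^ n)))

noncomputable section XiAux

namespace XiAux

abbrev X1 := OnePoint ℝ

lemma hp_ne (l : ℝ) : (l : ℂ) + I ≠ 0 := by
  intro h
  have := congrArg Complex.im h
  simp at this

lemma hm_ne (l : ℝ) : (l : ℂ) - I ≠ 0 := by
  intro h
  have := congrArg Complex.im h
  simp at this

lemma cont_p : Continuous (fun l : ℝ => ((l : ℂ) + I)⁻¹) :=
  ((Complex.continuous_ofReal.add continuous_const)).inv₀ hp_ne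

lemma cont_m : Continuous (fun l : ℝ => ((l : ℂ) - I)⁻¹) :=
  ((Complex.continuous_ofReal.sub continuous_const)).inv₀ hm_ne

lemma tend_p : Tendsto (fun l : ℝ => ((l : ℂ) + I)⁻¹) (cocompact ℝ) (𝓝 0) := by
  have h1 : Tendsto (fun l : ℝ => ‖(l : ℂ) + I‖) (cocompact ℝ) atTop := by
    refine tendsto_atTop_mono (fun l => ?_) tendsto_norm_cocompact_atTop
    calc ‖l‖ = |((l:ℂ)+I).re| := by simp
    _ ≤ ‖(l:ℂ)+I‖ := Complex.abs_re_le_norm _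
  have h2 := h1.inv_tendsto_atTop
  rw [tendsto_zero_iff_norm_tendsto_zero]
  exact h2.congr (fun l => by simp [norm_inv])

end XiAux

namespace XiAux

lemma tend_m : Tendsto (fun l : ℝ => ((l : ℂ) - I)⁻¹) (cocompact ℝ) (𝓝 0) := by
  have h1 : Tendsto (fun l : ℝ => ‖(l : ℂ) - I‖) (cocompact ℝ) atTop := by
    refine tendsto_atTop_mono (fun l => ?_) tendsto_norm_cocompact_atTop
    calc ‖l‖ = |((l:ℂ)-I).re| := by simp
    _ ≤ ‖(l:ℂ)-I‖ := Complex.abs_re_le_norm _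
  have h2 := h1.inv_tendsto_atTop
  rw [tendsto_zero_iff_norm_tendsto_zero]
  exact h2.congr (fun l => by simp [norm_inv])

/-- extension of `(λ+i)⁻¹` to the one-point compactification. -/
def gp : C(X1, ℂ) :=
  OnePoint.continuousMapMk ⟨_, cont_p⟩ 0
    (by rw [Filter.coclosedCompact_eq_cocompact]; exact tend_p)

/-- extension of `(λ-i)⁻¹` to the one-point compactification. -/
def gm : C(X1, ℂ) :=
  OnePoint.continuousMapMk ⟨_, cont_m⟩ 0
    (by rw [Filter.coclosedCompact_eq_cocompact]; exact tend_m)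

@[simp] lemma gp_coe (l : ℝ) : gp (l : X1) = ((l : ℂ) + I)⁻¹ := rfl
@[simp] lemma gm_coe (l : ℝ) : gm (l : X1) = ((l : ℂ) - I)⁻¹ := rfl
@[simp] lemma gp_infty : gp OnePoint.infty = 0 := rfl
@[simp] lemma gm_infty : gm OnePoint.infty = 0 := rfl

lemma star_gp : star gp = gm := by
  ext x
  induction x using OnePoint.rec with
  | infty => simp [ContinuousMap.star_apply]
  | coe l =>
    simp only [ContinuousMap.star_apply, gp_coe, gm_coe, star_inv₀]
    congr 1
    simp [Complex.ext_iff]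

lemma star_gm : star gm = gp := by
  rw [← star_gp, star_star]

/-- partial fractions -/
lemma pf : gp * gm = (2 * I)⁻¹ • (gm - gp) := by
  ext x
  induction x using OnePoint.rec with
  | infty => simp
  | coe l =>
    simp only [ContinuousMap.mul_apply, ContinuousMap.smul_apply, ContinuousMap.sub_apply,
      gp_coe, gm_coe, smul_eq_mul]
    have h1 := hp_ne l
    have h2 := hm_ne l
    field_simp
    ring

end XiAux

namespace XiAux

/-- generating set -/
def S : Set C(X1, ℂ) := (Set.range fun n : ℕ => gp ^ n) ∪ (Set.range fun n : ℕ => gm ^ n)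

/-- span of the moments -/
def W : Submodule ℂ C(X1, ℂ) := Submodule.span ℂ S

lemma gp_pow_mem (n : ℕ) : gp ^ n ∈ W :=
  Submodule.subset_span (Or.inl ⟨n, rfl⟩)

lemma gm_pow_mem (n : ℕ) : gm ^ n ∈ W :=
  Submodule.subset_span (Or.inr ⟨n, rfl⟩)

lemma one_mem_W : (1 : C(X1, ℂ)) ∈ W := by
  simpa using gp_pow_mem 0

lemma mixed_mem : ∀ n m : ℕ, gp ^ n * gm ^ m ∈ W := by
  intro n
  induction n with
  | zero => intro m; simpa using gm_pow_mem m
  | succ n ih =>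
    intro m
    induction m with
    | zero => simpa using gp_pow_mem (n + 1)
    | succ m ihm =>
      have key : gp ^ (n + 1) * gm ^ (m + 1)
          = (2 * I)⁻¹ • (gp ^ n * gm ^ (m + 1) - gp ^ (n + 1) * gm ^ m) := by
        have h1 : gp ^ (n + 1) * gm ^ (m + 1) = (gp ^ n * gm ^ m) * (gp * gm) := by ring
        rw [h1, pf, mul_smul_comm]
        congr 1
        ring
      rw [key]
      exact W.smul_mem _ (W.sub_mem (ih _) ihm)

open Pointwise in
lemma mul_mem_W : ∀ x ∈ W, ∀ y ∈ W, x * y ∈ W := by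
  have hSS : S * S ⊆ (W : Set C(X1, ℂ)) := by
    rw [Set.mul_subset_iff]
    rintro x (⟨n, rfl⟩ | ⟨n, rfl⟩) y (⟨m, rfl⟩ | ⟨m, rfl⟩)
    · rw [← pow_add]; exact gp_pow_mem _
    · exact mixed_mem n m
    · rw [mul_comm]; exact mixed_mem m n
    · rw [← pow_add]; exact gm_pow_mem _
  intro x hx y hy
  have : W * W ≤ W := by
    rw [W, Submodule.span_mul_span]
    exact Submodule.span_le.mpr hSS
  exact this (Submodule.mul_mem_mul hx hy)

lemma star_mem_W : ∀ x ∈ W, star x ∈ W := by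
  intro x hx
  refine Submodule.span_induction ?_ ?_ ?_ ?_ hx
  · rintro x (⟨n, rfl⟩ | ⟨n, rfl⟩)
    · rw [star_pow, star_gp]; exact gm_pow_mem n
    · rw [star_pow, star_gm]; exact gp_pow_mem n
  · simpa using W.zero_mem
  · intro a b _ _ ha hb; rw [star_add]; exact W.add_mem ha hb
  · intro c a _ ha; rw [star_smul]; exact W.smul_mem _ ha

/-- `W` as a star subalgebra. -/
def Wsub : StarSubalgebra ℂ C(X1, ℂ) :=
  { W.toSubalgebra one_mem_W (fun x y hx hy => mul_mem_W x hx y hy) with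
    star_mem' := fun ha => star_mem_W _ ha }

lemma mem_Wsub_iff (x : C(X1, ℂ)) : x ∈ Wsub ↔ x ∈ W := Iff.rfl

lemma Wsub_separates : Wsub.SeparatesPoints := by
  intro x y hxy
  refine ⟨gp, ⟨gp, by simpa [mem_Wsub_iff] using gp_pow_mem 1, rfl⟩, ?_⟩
  induction x using OnePoint.rec with
  | infty =>
    induction y using OnePoint.rec with
    | infty => exact absurd rfl hxy
    | coe m => simp only [gp_infty, gp_coe]; exact fun h => inv_ne_zero (hp_ne m) h.symm
  | coe l =>
    induction y using OnePoint.rec with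
    | infty => simp only [gp_infty, gp_coe]; exact inv_ne_zero (hp_ne l)
    | coe m =>
      simp only [gp_coe]
      intro h
      apply hxy
      have := inv_injective h
      have hlm : l = m := by
        have := congrArg Complex.re this
        simpa using this
      rw [hlm]

lemma Wsub_dense : Wsub.topologicalClosure = ⊤ :=
  ContinuousMap.starSubalgebra_topologicalClosure_eq_top_of_separatesPoints Wsub Wsub_separates

lemma exists_approx (h : C(X1, ℂ)) {ε : ℝ} (hε : 0 < ε) :
    ∃ g ∈ W, ∀ x, ‖h x - g x‖ < ε := by
  have hmem : h ∈ closure (Wsub : Set C(X1, ℂ)) := by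
    have : h ∈ Wsub.topologicalClosure := by rw [Wsub_dense]; trivial
    exact this
  rw [Metric.mem_closure_iff] at hmem
  obtain ⟨g, hg, hdist⟩ := hmem ε hε
  refine ⟨g, hg, fun x => ?_⟩
  calc ‖h x - g x‖ = ‖(h - g) x‖ := by simp
  _ ≤ ‖h - g‖ := ContinuousMap.norm_coe_le_norm _ _
  _ = dist h g := (dist_eq_norm _ _).symm
  _ < ε := hdist

end XiAux

namespace XiAux

lemma integ_mul {w : ℝ → ℝ} (hw : Integrable w) {g : ℝ → ℂ}
    (hg : AEStronglyMeasurable g volume) {B : ℝ} (hB : ∀ l, ‖g l‖ ≤ B) :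
    Integrable (fun l => (w l : ℂ) * g l) := by
  have h2 := Integrable.bdd_mul hw.ofReal hg (Filter.Eventually.of_forall hB)
  have : (fun l => (w l : ℂ) * g l) = fun l => g l * (w l : ℂ) := by
    funext l; ring
  rw [this]; exact h2

lemma integ_g {u : ℝ → ℝ} (hu : Integrable u) (g : C(X1, ℂ)) :
    Integrable (fun l : ℝ => (u l : ℂ) * g (l : X1)) :=
  integ_mul hu ((g.continuous.comp OnePoint.continuous_coe).aestronglyMeasurable)
    (fun l => g.norm_coe_le_norm _)

lemma conv_W (w : ℝ → ℝ) (wj : ℕ → ℝ → ℝ)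
    (hw : Integrable w) (hwj : ∀ j, Integrable (wj j))
    (hgen : ∀ g ∈ S, Tendsto (fun j => ∫ l : ℝ, (wj j l : ℂ) * g (l : X1)) atTop
        (𝓝 (∫ l : ℝ, (w l : ℂ) * g (l : X1)))) :
    ∀ g ∈ W, Tendsto (fun j => ∫ l : ℝ, (wj j l : ℂ) * g (l : X1)) atTop
        (𝓝 (∫ l : ℝ, (w l : ℂ) * g (l : X1))) := by
  intro g hg
  refine Submodule.span_induction hgen ?_ ?_ ?_ hg
  · simpa using tendsto_const_nhds
  · intro a b _ _ iha ihb
    have key : ∀ (u : ℝ → ℝ), Integrable u →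
        ∫ l : ℝ, (u l : ℂ) * (a + b) (l : X1)
          = (∫ l : ℝ, (u l : ℂ) * a (l : X1)) + ∫ l : ℝ, (u l : ℂ) * b (l : X1) := by
      intro u hu
      rw [← integral_add (integ_g hu a) (integ_g hu b)]
      congr 1; funext l; simp [ContinuousMap.add_apply]; ring
    have h1 : (fun j => ∫ l : ℝ, (wj j l : ℂ) * (a + b) (l : X1))
        = fun j => (∫ l : ℝ, (wj j l : ℂ) * a (l : X1)) + ∫ l : ℝ, (wj j l : ℂ) * b (l : X1) := by
      funext j; exact key _ (hwj j)
    rw [h1, key w hw]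
    exact iha.add ihb
  · intro c a _ iha
    have key : ∀ (u : ℝ → ℝ), ∫ l : ℝ, (u l : ℂ) * (c • a) (l : X1)
        = c * ∫ l : ℝ, (u l : ℂ) * a (l : X1) := by
      intro u
      rw [← smul_eq_mul, ← integral_smul]
      congr 1; funext l; simp [ContinuousMap.smul_apply, smul_eq_mul]; ring
    have h1 : (fun j => ∫ l : ℝ, (wj j l : ℂ) * (c • a) (l : X1))
        = fun j => c * ∫ l : ℝ, (wj j l : ℂ) * a (l : X1) := by
      funext j; exact key _
    rw [h1, key w]
    exact iha.const_mul c

end XiAux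

namespace XiAux

lemma vague (w : ℝ → ℝ) (wj : ℕ → ℝ → ℝ)
    (hw : Integrable w) (hwj : ∀ j, Integrable (wj j))
    (hw0 : ∀ l, 0 ≤ w l) (hwj0 : ∀ j l, 0 ≤ wj j l)
    (hgen : ∀ g ∈ S, Tendsto (fun j => ∫ l : ℝ, (wj j l : ℂ) * g (l : X1)) atTop
        (𝓝 (∫ l : ℝ, (w l : ℂ) * g (l : X1))))
    (M : ℝ) (hM : ∀ j, ∫ l : ℝ, wj j l ≤ M) :
    ∀ h : C(X1, ℂ), Tendsto (fun j => ∫ l : ℝ, (wj j l : ℂ) * h (l : X1)) atTop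
        (𝓝 (∫ l : ℝ, (w l : ℂ) * h (l : X1))) := by
  intro h
  rw [Metric.tendsto_nhds]
  intro ε hε
  set mw : ℝ := ∫ l : ℝ, w l with hmw
  have hmw0 : 0 ≤ mw := integral_nonneg hw0
  have hM0 : 0 ≤ M := le_trans (integral_nonneg (hwj0 0)) (hM 0)
  set D : ℝ := M + mw + 1 with hD
  have hD0 : 0 < D := by positivity
  have hδ : 0 < ε / (2 * D) := by positivity
  obtain ⟨g, hgW, hgapp⟩ := exists_approx h hδ
  have hconv := conv_W w wj hw hwj hgen g hgW
  -- key estimate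
  have key : ∀ (u : ℝ → ℝ), Integrable u → (∀ l, 0 ≤ u l) →
      ‖(∫ l : ℝ, (u l : ℂ) * h (l : X1)) - ∫ l : ℝ, (u l : ℂ) * g (l : X1)‖
        ≤ (∫ l : ℝ, u l) * (ε / (2 * D)) := by
    intro u hu hu0
    rw [← integral_sub (integ_g hu h) (integ_g hu g)]
    have hb : Integrable (fun l : ℝ => u l * (ε / (2 * D))) := hu.mul_const _
    calc ‖∫ l : ℝ, ((u l : ℂ) * h (l : X1) - (u l : ℂ) * g (l : X1))‖
        ≤ ∫ l : ℝ, u l * (ε / (2 * D)) := by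
          refine norm_integral_le_of_norm_le hb (Filter.Eventually.of_forall fun l => ?_)
          rw [← mul_sub, norm_mul, Complex.norm_real, Real.norm_eq_abs, _root_.abs_of_nonneg (hu0 l)]
          exact mul_le_mul_of_nonneg_left (le_of_lt (hgapp _)) (hu0 l)
      _ = (∫ l : ℝ, u l) * (ε / (2 * D)) := by rw [integral_mul_const]
  have hmid : ∀ᶠ j in atTop,
      ‖(∫ l : ℝ, (wj j l : ℂ) * g (l : X1)) - ∫ l : ℝ, (w l : ℂ) * g (l : X1)‖ < ε / 2 := by
    have := Metric.tendsto_nhds.mp hconv (ε / 2) (by positivity)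
    simpa [dist_eq_norm] using this
  filter_upwards [hmid] with j hj
  rw [dist_eq_norm]
  have h1 := key (wj j) (hwj j) (hwj0 j)
  have h2 := key w hw hw0
  have hchain : ‖(∫ l : ℝ, (wj j l : ℂ) * h (l : X1)) - ∫ l : ℝ, (w l : ℂ) * h (l : X1)‖
      ≤ (∫ l : ℝ, wj j l) * (ε / (2 * D)) +
        ‖(∫ l : ℝ, (wj j l : ℂ) * g (l : X1)) - ∫ l : ℝ, (w l : ℂ) * g (l : X1)‖ +
        mw * (ε / (2 * D)) := by
    have tri : ∀ a b c d : ℂ, ‖a - d‖ ≤ ‖a - b‖ + ‖b - c‖ + ‖c - d‖ := by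
      intro a b c d
      calc ‖a - d‖ = ‖(a - b) + (b - c) + (c - d)‖ := by ring_nf
      _ ≤ ‖(a - b) + (b - c)‖ + ‖c - d‖ := norm_add_le _ _
      _ ≤ ‖a - b‖ + ‖b - c‖ + ‖c - d‖ := by
          exact add_le_add_left (norm_add_le _ _) _
    refine le_trans (tri _ (∫ l : ℝ, (wj j l : ℂ) * g (l : X1))
      (∫ l : ℝ, (w l : ℂ) * g (l : X1)) _) ?_
    gcongr
    rw [norm_sub_rev]
    exact h2
  have hwjM : (∫ l : ℝ, wj j l) * (ε / (2 * D)) ≤ M * (ε / (2 * D)) :=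
    mul_le_mul_of_nonneg_right (hM j) (le_of_lt hδ)
  have hfin : M * (ε / (2 * D)) + ε / 2 + mw * (ε / (2 * D)) ≤ ε := by
    have h3 : (M + mw) * (ε / (2 * D)) ≤ D * (ε / (2 * D)) := by
      apply mul_le_mul_of_nonneg_right _ (le_of_lt hδ)
      rw [hD]; linarith
    have h4 : D * (ε / (2 * D)) = ε / 2 := by
      field_simp
    nlinarith [h3, h4]
  calc ‖(∫ l : ℝ, (wj j l : ℂ) * h (l : X1)) - ∫ l : ℝ, (w l : ℂ) * h (l : X1)‖
      ≤ (∫ l : ℝ, wj j l) * (ε / (2 * D)) +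
        ‖(∫ l : ℝ, (wj j l : ℂ) * g (l : X1)) - ∫ l : ℝ, (w l : ℂ) * g (l : X1)‖ +
        mw * (ε / (2 * D)) := hchain
    _ < M * (ε / (2 * D)) + ε / 2 + mw * (ε / (2 * D)) := by
        have := hwjM
        linarith [hj]
    _ ≤ ε := hfin

end XiAux

namespace XiAux

/-- cutoff -/
def phi (k : ℕ) (l : ℝ) : ℝ := ((k : ℝ) + 1) / (l ^ 2 + ((k : ℝ) + 1))

lemma phi_denom_pos (k : ℕ) (l : ℝ) : 0 < l ^ 2 + ((k : ℝ) + 1) := by positivity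

lemma phi_cont (k : ℕ) : Continuous (phi k) :=
  continuous_const.div (by continuity) (fun l => ne_of_gt (phi_denom_pos k l))

lemma phi_nonneg (k : ℕ) (l : ℝ) : 0 ≤ phi k l :=
  div_nonneg (by positivity) (le_of_lt (phi_denom_pos k l))

lemma phi_le_one (k : ℕ) (l : ℝ) : phi k l ≤ 1 := by
  rw [phi, div_le_one (phi_denom_pos k l)]
  nlinarith [sq_nonneg l]

lemma phi_cocompact (k : ℕ) : Tendsto (phi k) (cocompact ℝ) (𝓝 0) := by
  have h1 : Tendsto (fun l : ℝ => l ^ 2 + ((k : ℝ) + 1)) (cocompact ℝ) atTop := by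
    have h2 : Tendsto (fun x : ℝ => x ^ 2 + ((k : ℝ) + 1)) atTop atTop :=
      tendsto_atTop_add_const_right atTop _ (tendsto_pow_atTop two_ne_zero)
    have h3 := h2.comp (tendsto_norm_cocompact_atTop (E := ℝ))
    have : (fun l : ℝ => l ^ 2 + ((k : ℝ) + 1))
        = (fun x : ℝ => x ^ 2 + ((k : ℝ) + 1)) ∘ (fun l : ℝ => ‖l‖) := by
      funext l; simp [Real.norm_eq_abs, sq_abs]
    rw [this]; exact h3
  have h4 := h1.inv_tendsto_atTop
  have h5 := h4.const_mul ((k : ℝ) + 1)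
  rw [mul_zero] at h5
  exact h5.congr (fun l => by simp [phi, div_eq_mul_inv])

lemma phi_to_one (l : ℝ) : Tendsto (fun k : ℕ => phi k l) atTop (𝓝 1) := by
  have h0 : Tendsto (fun k : ℕ => (k : ℝ) + 1) atTop atTop :=
    tendsto_atTop_add_const_right atTop 1 tendsto_natCast_atTop_atTop
  have h1 : Tendsto (fun k : ℕ => l ^ 2 / ((k : ℝ) + 1)) atTop (𝓝 0) :=
    Tendsto.div_atTop tendsto_const_nhds h0
  have h2 : Tendsto (fun k : ℕ => l ^ 2 / ((k : ℝ) + 1) + 1) atTop (𝓝 1) := by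
    simpa using h1.add_const 1
  have h3 := h2.inv₀ one_ne_zero
  have heq : ∀ k : ℕ, phi k l = (l ^ 2 / ((k : ℝ) + 1) + 1)⁻¹ := by
    intro k
    have hc : ((k : ℝ) + 1) ≠ 0 := by positivity
    have hd := phi_denom_pos k l
    rw [phi, div_add_one hc, inv_div]
  simp only [heq]
  simpa using h3

end XiAux

namespace XiAux

/-- extension of the cutoff to the compactification. -/
def Phi (k : ℕ) : C(X1, ℂ) :=
  OnePoint.continuousMapMk ⟨fun l => (phi k l : ℂ), Complex.continuous_ofReal.comp (phi_cont k)⟩ 0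
    (by rw [Filter.coclosedCompact_eq_cocompact]
        have := (Complex.continuous_ofReal.tendsto 0).comp (phi_cocompact k)
        simpa [Function.comp_def] using this)

@[simp] lemma Phi_coe (k : ℕ) (l : ℝ) : Phi k (l : X1) = (phi k l : ℂ) := rfl

lemma hint_sub {u : ℝ → ℝ} (hu : Integrable u) (k : ℕ) :
    Integrable (fun l => u l * (1 - phi k l)) := by
  have hcont : Continuous (fun l : ℝ => 1 - phi k l) := continuous_const.sub (phi_cont k)
  have h := Integrable.bdd_mul (f := fun l : ℝ => 1 - phi k l) hu hcont.aestronglyMeasurable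
    (Filter.Eventually.of_forall fun l => by
      show ‖1 - phi k l‖ ≤ 1
      rw [Real.norm_eq_abs, abs_le]
      constructor <;> nlinarith [phi_nonneg k l, phi_le_one k l])
  have : (fun l => u l * (1 - phi k l)) = fun l => (1 - phi k l) * u l := by
    funext l; ring
  rw [this]; exact h

lemma pos_conv (w : ℝ → ℝ) (wj : ℕ → ℝ → ℝ)
    (hw : Integrable w) (hwj : ∀ j, Integrable (wj j))
    (hw0 : ∀ l, 0 ≤ w l) (hwj0 : ∀ j l, 0 ≤ wj j l)
    (hp : ∀ n : ℕ, Tendsto (fun j => ∫ l : ℝ, (wj j l : ℂ) * (((l : ℂ) + I)⁻¹) ^ n) atTop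
        (𝓝 (∫ l : ℝ, (w l : ℂ) * (((l : ℂ) + I)⁻¹) ^ n)))
    (hm : ∀ n : ℕ, Tendsto (fun j => ∫ l : ℝ, (wj j l : ℂ) * (((l : ℂ) - I)⁻¹) ^ n) atTop
        (𝓝 (∫ l : ℝ, (w l : ℂ) * (((l : ℂ) - I)⁻¹) ^ n)))
    (f : ℝ → ℂ) (hf : Continuous f) (C : ℝ) (hfb : ∀ l : ℝ, ‖f l‖ ≤ C) :
    Tendsto (fun j => ∫ l : ℝ, (wj j l : ℂ) * f l) atTop
      (𝓝 (∫ l : ℝ, (w l : ℂ) * f l)) := by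
  have hC0 : 0 ≤ C := le_trans (norm_nonneg (f 0)) (hfb 0)
  have hgen : ∀ g ∈ S, Tendsto (fun j => ∫ l : ℝ, (wj j l : ℂ) * g (l : X1)) atTop
      (𝓝 (∫ l : ℝ, (w l : ℂ) * g (l : X1))) := by
    rintro g (⟨n, rfl⟩ | ⟨n, rfl⟩)
    · simpa only [ContinuousMap.pow_apply, gp_coe] using hp n
    · simpa only [ContinuousMap.pow_apply, gm_coe] using hm n
  have hoj : ∀ u : ℝ → ℝ, (∫ l : ℝ, (u l : ℂ)) = ((∫ l : ℝ, u l : ℝ) : ℂ) := fun u =>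
    integral_ofReal
  have hmass : Tendsto (fun j => ∫ l : ℝ, wj j l) atTop (𝓝 (∫ l : ℝ, w l)) := by
    have hmc : Tendsto (fun j => ∫ l : ℝ, (wj j l : ℂ)) atTop (𝓝 (∫ l : ℝ, (w l : ℂ))) := by
      have := hp 0
      simpa using this
    have hre := (Complex.continuous_re.tendsto _).comp hmc
    simp only [Function.comp, hoj, Complex.ofReal_re] at hre
    exact hre
  obtain ⟨M, hMub⟩ := hmass.bddAbove_range
  have hM : ∀ j, ∫ l : ℝ, wj j l ≤ M := fun j => hMub ⟨j, rfl⟩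
  have hvague := vague w wj hw hwj hw0 hwj0 hgen M hM
  rw [Metric.tendsto_nhds]
  intro ε hε
  have hδ1 : 0 < ε / (4 * (C + 1)) := by positivity
  set δ1 : ℝ := ε / (4 * (C + 1)) with hδ1def
  -- choose the cutoff index
  have hrtend : Tendsto (fun k => ∫ l : ℝ, w l * (1 - phi k l)) atTop (𝓝 0) := by
    have hdc := tendsto_integral_of_dominated_convergence (μ := volume)
      (F := fun k l => w l * (1 - phi k l)) (f := fun _ : ℝ => (0 : ℝ)) w
      (fun k => (hint_sub hw k).aestronglyMeasurable) hw
      (fun k => Filter.Eventually.of_forall fun l => by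
        rw [Real.norm_eq_abs, abs_mul, _root_.abs_of_nonneg (hw0 l)]
        have h1 : |1 - phi k l| ≤ 1 := by
          rw [abs_le]; constructor <;> nlinarith [phi_nonneg k l, phi_le_one k l]
        nlinarith [hw0 l])
      (Filter.Eventually.of_forall fun l => by
        have := (phi_to_one l).const_sub 1
        have h2 := this.const_mul (w l)
        simpa using h2)
    simpa using hdc
  obtain ⟨k, hk⟩ := (hrtend.eventually_lt_const hδ1).exists
  -- the function f·φ_k extends to the compactification
  have hFcont : Continuous fun l : ℝ => f l * (phi k l : ℂ) :=
    hf.mul (Complex.continuous_ofReal.comp (phi_cont k))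
  have hFtend : Tendsto (fun l : ℝ => f l * (phi k l : ℂ)) (cocompact ℝ) (𝓝 0) := by
    have hb : Tendsto (fun l : ℝ => C * phi k l) (cocompact ℝ) (𝓝 0) := by
      simpa using (phi_cocompact k).const_mul C
    refine squeeze_zero_norm (fun l => ?_) hb
    rw [norm_mul, Complex.norm_real, Real.norm_eq_abs, _root_.abs_of_nonneg (phi_nonneg k l)]
    exact mul_le_mul_of_nonneg_right (hfb l) (phi_nonneg k l)
  set hF : C(X1, ℂ) := OnePoint.continuousMapMk ⟨_, hFcont⟩ 0
    (by rw [Filter.coclosedCompact_eq_cocompact]; exact hFtend) with hFdef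
  have hFcoe : ∀ l : ℝ, hF (l : X1) = f l * (phi k l : ℂ) := fun l => rfl
  -- real convergence of the truncated masses
  have hor : ∀ u : ℝ → ℝ, ((∫ l : ℝ, u l : ℝ) : ℂ) = ∫ l : ℝ, ((u l : ℝ) : ℂ) := fun u =>
    (integral_ofReal).symm
  have hid : ∀ u : ℝ → ℝ, (∫ l : ℝ, (u l : ℂ) * ((1 : C(X1, ℂ)) - Phi k) (l : X1))
      = ((∫ l : ℝ, u l * (1 - phi k l) : ℝ) : ℂ) := by
    intro u
    rw [hor]
    congr 1; funext l
    simp only [ContinuousMap.sub_apply, ContinuousMap.one_apply, Phi_coe]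
    push_cast; ring
  have hrj : Tendsto (fun j => ∫ l : ℝ, wj j l * (1 - phi k l)) atTop
      (𝓝 (∫ l : ℝ, w l * (1 - phi k l))) := by
    have hv := hvague ((1 : C(X1, ℂ)) - Phi k)
    simp only [hid] at hv
    have hre := (Complex.continuous_re.tendsto _).comp hv
    simp only [Function.comp, Complex.ofReal_re] at hre
    exact hre
  have hev1 := hrj.eventually_lt_const hk
  have hev2 : ∀ᶠ j in atTop,
      ‖(∫ l : ℝ, (wj j l : ℂ) * hF (l : X1)) - ∫ l : ℝ, (w l : ℂ) * hF (l : X1)‖ < ε / 4 := by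
    have := Metric.tendsto_nhds.mp (hvague hF) (ε / 4) (by positivity)
    simpa [dist_eq_norm] using this
  have key1 : ∀ u : ℝ → ℝ, Integrable u → (∀ l, 0 ≤ u l) →
      ‖(∫ l : ℝ, (u l : ℂ) * f l) - ∫ l : ℝ, (u l : ℂ) * hF (l : X1)‖
        ≤ C * ∫ l : ℝ, u l * (1 - phi k l) := by
    intro u hu hu0
    have hif : Integrable (fun l : ℝ => (u l : ℂ) * f l) :=
      integ_mul hu hf.aestronglyMeasurable hfb
    have hih : Integrable (fun l : ℝ => (u l : ℂ) * hF (l : X1)) := integ_g hu hF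
    rw [← integral_sub hif hih]
    have hb : Integrable (fun l : ℝ => C * (u l * (1 - phi k l))) := (hint_sub hu k).const_mul C
    calc ‖∫ l : ℝ, ((u l : ℂ) * f l - (u l : ℂ) * hF (l : X1))‖
        ≤ ∫ l : ℝ, C * (u l * (1 - phi k l)) := by
          refine norm_integral_le_of_norm_le hb (Filter.Eventually.of_forall fun l => ?_)
          rw [hFcoe l]
          have heq : (u l : ℂ) * f l - (u l : ℂ) * (f l * (phi k l : ℂ))
              = ((u l : ℝ) : ℂ) * f l * (((1 - phi k l : ℝ)) : ℂ) := by push_cast; ring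
          rw [heq, norm_mul, norm_mul, Complex.norm_real, Complex.norm_real,
            Real.norm_eq_abs, Real.norm_eq_abs, _root_.abs_of_nonneg (hu0 l),
            _root_.abs_of_nonneg (by nlinarith [phi_le_one k l] : (0:ℝ) ≤ 1 - phi k l)]
          nlinarith [mul_nonneg (mul_nonneg (sub_nonneg.mpr (hfb l)) (hu0 l))
            (sub_nonneg.mpr (phi_le_one k l))]
      _ = C * ∫ l : ℝ, u l * (1 - phi k l) := integral_const_mul C _
  filter_upwards [hev1, hev2] with j h1 h2
  rw [dist_eq_norm]
  have k1 := key1 (wj j) (hwj j) (hwj0 j)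
  have k2 := key1 w hw hw0
  have tri : ‖(∫ l : ℝ, (wj j l : ℂ) * f l) - ∫ l : ℝ, (w l : ℂ) * f l‖
      ≤ ‖(∫ l : ℝ, (wj j l : ℂ) * f l) - ∫ l : ℝ, (wj j l : ℂ) * hF (l : X1)‖
        + ‖(∫ l : ℝ, (wj j l : ℂ) * hF (l : X1)) - ∫ l : ℝ, (w l : ℂ) * hF (l : X1)‖
        + ‖(∫ l : ℝ, (w l : ℂ) * f l) - ∫ l : ℝ, (w l : ℂ) * hF (l : X1)‖ := by
    have habc : ∀ a b c d : ℂ, ‖a - d‖ ≤ ‖a - b‖ + ‖b - c‖ + ‖d - c‖ := by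
      intro a b c d
      calc ‖a - d‖ = ‖(a - b) + (b - c) + (c - d)‖ := by ring_nf
      _ ≤ ‖(a - b) + (b - c)‖ + ‖c - d‖ := norm_add_le _ _
      _ ≤ ‖a - b‖ + ‖b - c‖ + ‖c - d‖ := add_le_add_left (norm_add_le _ _) _
      _ = ‖a - b‖ + ‖b - c‖ + ‖d - c‖ := by rw [norm_sub_rev c d]
    exact habc _ _ _ _
  have e1 : C * (∫ l : ℝ, wj j l * (1 - phi k l)) ≤ C * δ1 :=
    mul_le_mul_of_nonneg_left (le_of_lt h1) hC0
  have e2 : C * (∫ l : ℝ, w l * (1 - phi k l)) ≤ C * δ1 :=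
    mul_le_mul_of_nonneg_left (le_of_lt hk) hC0
  have e3 : C * δ1 ≤ ε / 4 := by
    have h5 : C * δ1 ≤ (C + 1) * δ1 := mul_le_mul_of_nonneg_right (by linarith) (le_of_lt hδ1)
    have h6 : (C + 1) * δ1 = ε / 4 := by
      rw [hδ1def]
      field_simp
    linarith
  linarith [tri, k1, k2, h2, e1, e2, e3, hε]

end XiAux

namespace XiAux

lemma cast1 (a l : ℝ) : (a : ℂ) * ((l : ℂ) ^ 2 + 1)⁻¹ = ((a / (l ^ 2 + 1) : ℝ) : ℂ) := by
  push_cast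
  ring

end XiAux

end XiAux


/-- Theorem 3.13 (first assertion): weak convergence of the weighted spectral shift
measures, i.e. convergence against all bounded continuous functions. -/
theorem xi_weighted_weak_convergence
    (ξp ξm : ℝ → ℝ) (ξjp ξjm : ℕ → ℝ → ℝ)
    (h : MomentCondition ξp ξm ξjp ξjm)
    (f : ℝ → ℂ) (hf : Continuous f) (C : ℝ) (hfb : ∀ l : ℝ, ‖f l‖ ≤ C) :
    Tendsto
      (fun j => ∫ l : ℝ, ((ξjp j l - ξjm j l : ℝ) : ℂ) * f l * ((l : ℂ) ^ 2 + 1)⁻¹)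
      atTop
      (𝓝 (∫ l : ℝ, ((ξp l - ξm l : ℝ) : ℂ) * f l * ((l : ℂ) ^ 2 + 1)⁻¹)) := by
  obtain ⟨hmp, hmm, hmjp, hmjm, h0p, h0m, h0jp, h0jm, hip, him, hijp, hijm, hmom⟩ := h
  have hppI : ∀ n : ℕ, Tendsto
      (fun j => ∫ l : ℝ, ((ξjp j l / (l ^ 2 + 1) : ℝ) : ℂ) * (((l : ℂ) + I)⁻¹) ^ n) atTop
      (𝓝 (∫ l : ℝ, ((ξp l / (l ^ 2 + 1) : ℝ) : ℂ) * (((l : ℂ) + I)⁻¹) ^ n)) := by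
    intro n
    have h1 := (hmom n).1
    simpa only [XiAux.cast1] using h1
  have hppM : ∀ n : ℕ, Tendsto
      (fun j => ∫ l : ℝ, ((ξjp j l / (l ^ 2 + 1) : ℝ) : ℂ) * (((l : ℂ) - I)⁻¹) ^ n) atTop
      (𝓝 (∫ l : ℝ, ((ξp l / (l ^ 2 + 1) : ℝ) : ℂ) * (((l : ℂ) - I)⁻¹) ^ n)) := by
    intro n
    have h1 := (hmom n).2.1
    simpa only [XiAux.cast1] using h1
  have hmmI : ∀ n : ℕ, Tendsto
      (fun j => ∫ l : ℝ, ((ξjm j l / (l ^ 2 + 1) : ℝ) : ℂ) * (((l : ℂ) + I)⁻¹) ^ n) atTop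
      (𝓝 (∫ l : ℝ, ((ξm l / (l ^ 2 + 1) : ℝ) : ℂ) * (((l : ℂ) + I)⁻¹) ^ n)) := by
    intro n
    have h1 := (hmom n).2.2.1
    simpa only [XiAux.cast1] using h1
  have hmmM : ∀ n : ℕ, Tendsto
      (fun j => ∫ l : ℝ, ((ξjm j l / (l ^ 2 + 1) : ℝ) : ℂ) * (((l : ℂ) - I)⁻¹) ^ n) atTop
      (𝓝 (∫ l : ℝ, ((ξm l / (l ^ 2 + 1) : ℝ) : ℂ) * (((l : ℂ) - I)⁻¹) ^ n)) := by
    intro n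
    have h1 := (hmom n).2.2.2
    simpa only [XiAux.cast1] using h1
  have tp := XiAux.pos_conv (fun l => ξp l / (l ^ 2 + 1)) (fun j l => ξjp j l / (l ^ 2 + 1))
    hip hijp (fun l => div_nonneg (h0p l) (by positivity))
    (fun j l => div_nonneg (h0jp j l) (by positivity)) hppI hppM f hf C hfb
  have tm := XiAux.pos_conv (fun l => ξm l / (l ^ 2 + 1)) (fun j l => ξjm j l / (l ^ 2 + 1))
    him hijm (fun l => div_nonneg (h0m l) (by positivity))
    (fun j l => div_nonneg (h0jm j l) (by positivity)) hmmI hmmM f hf C hfb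
  have hsplit : ∀ (u v : ℝ → ℝ), Integrable (fun l : ℝ => u l / (l ^ 2 + 1)) →
      Integrable (fun l : ℝ => v l / (l ^ 2 + 1)) →
      (∫ l : ℝ, ((u l - v l : ℝ) : ℂ) * f l * ((l : ℂ) ^ 2 + 1)⁻¹)
        = (∫ l : ℝ, ((u l / (l ^ 2 + 1) : ℝ) : ℂ) * f l)
          - ∫ l : ℝ, ((v l / (l ^ 2 + 1) : ℝ) : ℂ) * f l := by
    intro u v hu hv
    rw [← integral_sub (XiAux.integ_mul hu hf.aestronglyMeasurable hfb)
      (XiAux.integ_mul hv hf.aestronglyMeasurable hfb)]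
    congr 1; funext l
    have hd : ((l : ℂ) ^ 2 + 1) ≠ 0 := by
      intro hc
      have h2 : ((l ^ 2 + 1 : ℝ) : ℂ) = 0 := by push_cast at hc ⊢; exact hc
      have h3 : (l ^ 2 + 1 : ℝ) = 0 := by exact_mod_cast h2
      nlinarith [sq_nonneg l]
    push_cast
    ring
  have hfun : (fun j => ∫ l : ℝ, ((ξjp j l - ξjm j l : ℝ) : ℂ) * f l * ((l : ℂ) ^ 2 + 1)⁻¹)
      = fun j => (∫ l : ℝ, ((ξjp j l / (l ^ 2 + 1) : ℝ) : ℂ) * f l)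
          - ∫ l : ℝ, ((ξjm j l / (l ^ 2 + 1) : ℝ) : ℂ) * f l :=
    funext fun j => hsplit _ _ (hijp j) (hijm j)
  rw [hfun, hsplit _ _ hip him]
  exact tp.sub tm
end

section
/- Let E > 0 and let a' ≤ a < b ≤ b' be real numbers, and let a ≤ x ≤ x' ≤ b. Then sinh(√E(x−a)) sinh(√E(b−x')) / (√E sinh(√E(b−a))) ≤ sinh(√E(x−a')) sinh(√E(b'−x')) / (√E sinh(√E(b'−a'))); that is, the one-dimensional Dirichlet Green's function at energy −E is monotone nondecreasing under enlargement of the interval. -/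
open Real

private lemma sinh_key (u u' d : ℝ) (hu : 0 ≤ u) (huu : u ≤ u') (hd : 0 ≤ d) :
    sinh u * sinh (u' + d) ≤ sinh u' * sinh (u + d) := by
  have e1 : 2 * (sinh u * sinh (u' + d)) = cosh (u + (u' + d)) - cosh (u - (u' + d)) := by
    rw [Real.cosh_add, Real.cosh_sub]; ring
  have e2 : 2 * (sinh u' * sinh (u + d)) = cosh (u' + (u + d)) - cosh (u' - (u + d)) := by
    rw [Real.cosh_add, Real.cosh_sub]; ring
  have h1 : cosh (u' - (u + d)) ≤ cosh (u - (u' + d)) := by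
    rw [Real.cosh_le_cosh]
    have hle : |u' - (u + d)| ≤ u' - u + d := abs_le.2 ⟨by linarith, by linarith⟩
    have : |u - (u' + d)| = u' - u + d := by
      rw [abs_of_nonpos (by linarith)]; ring
    linarith
  have h2 : u + (u' + d) = u' + (u + d) := by ring
  rw [h2] at e1
  linarith

private lemma sinh_frac (u u' d : ℝ) (hu : 0 ≤ u) (huu : u ≤ u') (hd : 0 ≤ d)
    (hpos : 0 < u + d) :
    sinh u / sinh (u + d) ≤ sinh u' / sinh (u' + d) := by
  have h1 : 0 < sinh (u + d) := Real.sinh_pos_iff.2 hpos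
  have h2 : 0 < sinh (u' + d) := Real.sinh_pos_iff.2 (by linarith)
  rw [div_le_div_iff₀ h1 h2]
  exact sinh_key u u' d hu huu hd

/-- Domain monotonicity (the one-dimensional instance of (4.10)): the Dirichlet Green's
function at energy `−E` increases when the interval `(a,b)` is enlarged to `(a',b')`. -/
theorem dirichlet_green_domain_monotone (E a b a' b' x x' : ℝ) (hE : 0 < E)
    (ha'a : a' ≤ a) (hab : a < b) (hbb' : b ≤ b')
    (hax : a ≤ x) (hxx' : x ≤ x') (hx'b : x' ≤ b) :
    sinh (sqrt E * (x - a)) * sinh (sqrt E * (b - x'))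
        / (sqrt E * sinh (sqrt E * (b - a)))
      ≤ sinh (sqrt E * (x - a')) * sinh (sqrt E * (b' - x'))
          / (sqrt E * sinh (sqrt E * (b' - a'))) := by
  set s := sqrt E with hs
  have hspos : 0 < s := Real.sqrt_pos.2 hE
  -- step 1: move left endpoint from a to a'
  have step1 : sinh (s * (x - a)) * sinh (s * (b - x')) / (s * sinh (s * (b - a)))
      ≤ sinh (s * (x - a')) * sinh (s * (b - x')) / (s * sinh (s * (b - a'))) := by
    have hfrac := sinh_frac (s * (x - a)) (s * (x - a')) (s * (b - x))
      (by nlinarith) (by nlinarith) (by nlinarith)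
      (by nlinarith)
    have e1 : s * (x - a) + s * (b - x) = s * (b - a) := by ring
    have e2 : s * (x - a') + s * (b - x) = s * (b - a') := by ring
    rw [e1, e2] at hfrac
    have ht : 0 ≤ sinh (s * (b - x')) / s := by
      apply div_nonneg _ hspos.le
      exact (Real.sinh_nonneg_iff).2 (by nlinarith)
    have := mul_le_mul_of_nonneg_right hfrac ht
    calc sinh (s * (x - a)) * sinh (s * (b - x')) / (s * sinh (s * (b - a)))
        = sinh (s * (x - a)) / sinh (s * (b - a)) * (sinh (s * (b - x')) / s) := by ring
      _ ≤ sinh (s * (x - a')) / sinh (s * (b - a')) * (sinh (s * (b - x')) / s) := this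
      _ = sinh (s * (x - a')) * sinh (s * (b - x')) / (s * sinh (s * (b - a'))) := by ring
  -- step 2: move right endpoint from b to b'
  have step2 : sinh (s * (x - a')) * sinh (s * (b - x')) / (s * sinh (s * (b - a')))
      ≤ sinh (s * (x - a')) * sinh (s * (b' - x')) / (s * sinh (s * (b' - a'))) := by
    have hfrac := sinh_frac (s * (b - x')) (s * (b' - x')) (s * (x' - a'))
      (by nlinarith) (by nlinarith) (by nlinarith)
      (by nlinarith)
    have e1 : s * (b - x') + s * (x' - a') = s * (b - a') := by ring
    have e2 : s * (b' - x') + s * (x' - a') = s * (b' - a') := by ring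
    rw [e1, e2] at hfrac
    have ht : 0 ≤ sinh (s * (x - a')) / s := by
      apply div_nonneg _ hspos.le
      exact (Real.sinh_nonneg_iff).2 (by nlinarith)
    have := mul_le_mul_of_nonneg_right hfrac ht
    calc sinh (s * (x - a')) * sinh (s * (b - x')) / (s * sinh (s * (b - a')))
        = sinh (s * (b - x')) / sinh (s * (b - a')) * (sinh (s * (x - a')) / s) := by ring
      _ ≤ sinh (s * (b' - x')) / sinh (s * (b' - a')) * (sinh (s * (x - a')) / s) := this
      _ = sinh (s * (x - a')) * sinh (s * (b' - x')) / (s * sinh (s * (b' - a'))) := by ring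
  exact step1.trans step2
end

section
/- Let R > 0, E > 0, and let x, x' ∈ ℝ³ satisfy ‖x‖ < R, 0 < ‖x'‖ < R, and x ≠ x'. Set ρ = (‖x'‖/R)·‖x − (R²/‖x'‖²) x'‖. Then 0 ≤ e^{−√E‖x−x'‖}/(4π‖x−x'‖) − e^{−√E ρ}/(4π ρ) ≤ e^{−√E‖x−x'‖}/(4π‖x−x'‖); that is, the method-of-images Dirichlet Green's function of the ball B_R at energy −E is nonnegative and bounded above by the free Green's function of ℝ³. -/
open Real

/-- The `n = 3`, negative-energy instance of (4.10) and (4.29): the method-of-images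
Dirichlet Green's function of the ball `B_R ⊂ ℝ³` at energy `−E` is nonnegative and
bounded above by the free Green's function of `ℝ³`. -/
theorem ball_dirichlet_green_bounds (R E : ℝ) (hR : 0 < R) (hE : 0 < E)
    (x x' : EuclideanSpace ℝ (Fin 3))
    (hx : ‖x‖ < R) (hx'0 : 0 < ‖x'‖) (hx' : ‖x'‖ < R) (hxx' : x ≠ x') :
    0 ≤ exp (-(sqrt E * ‖x - x'‖)) / (4 * π * ‖x - x'‖)
        - exp (-(sqrt E * ((‖x'‖ / R) * ‖x - (R ^ 2 / ‖x'‖ ^ 2) • x'‖)))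
            / (4 * π * ((‖x'‖ / R) * ‖x - (R ^ 2 / ‖x'‖ ^ 2) • x'‖)) ∧
    exp (-(sqrt E * ‖x - x'‖)) / (4 * π * ‖x - x'‖)
        - exp (-(sqrt E * ((‖x'‖ / R) * ‖x - (R ^ 2 / ‖x'‖ ^ 2) • x'‖)))
            / (4 * π * ((‖x'‖ / R) * ‖x - (R ^ 2 / ‖x'‖ ^ 2) • x'‖))
      ≤ exp (-(sqrt E * ‖x - x'‖)) / (4 * π * ‖x - x'‖) := by
  have hd : 0 < ‖x - x'‖ := norm_pos_iff.mpr (sub_ne_zero.mpr hxx')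
  set r : ℝ := ‖x'‖ with hr
  set d : ℝ := ‖x - x'‖ with hdd
  set c : ℝ := R ^ 2 / r ^ 2 with hc
  set ρ : ℝ := (r / R) * ‖x - c • x'‖ with hρ
  have hρ0 : 0 ≤ ρ := mul_nonneg (div_nonneg hx'0.le hR.le) (norm_nonneg _)
  -- key inequality : d ≤ ρ
  have h1 : ‖x - c • x'‖ ^ 2 = ‖x‖ ^ 2 - 2 * (c * inner ℝ x x') + c ^ 2 * r ^ 2 := by
    rw [norm_sub_sq_real, real_inner_smul_right, norm_smul, Real.norm_eq_abs,
      abs_of_nonneg (by positivity : (0:ℝ) ≤ c)]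
    ring
  have h2 : d ^ 2 = ‖x‖ ^ 2 - 2 * inner ℝ x x' + r ^ 2 := by
    rw [hdd, norm_sub_sq_real]
  have hsq : d ^ 2 ≤ ρ ^ 2 := by
    have hρ2 : ρ ^ 2 = (r / R) ^ 2 * ‖x - c • x'‖ ^ 2 := by rw [hρ]; ring
    have key : ρ ^ 2 - d ^ 2 = (R ^ 2 - r ^ 2) * (R ^ 2 - ‖x‖ ^ 2) / R ^ 2 := by
      rw [hρ2, h1, h2, hc]
      field_simp
      ring
    have h3 : 0 ≤ (R ^ 2 - r ^ 2) * (R ^ 2 - ‖x‖ ^ 2) / R ^ 2 := by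
      apply div_nonneg _ (by positivity)
      apply mul_nonneg <;> nlinarith [norm_nonneg x]
    linarith
  have hdρ : d ≤ ρ := by nlinarith
  have hρpos : 0 < ρ := lt_of_lt_of_le hd hdρ
  have himg_pos : 0 < exp (-(sqrt E * ρ)) / (4 * π * ρ) := by positivity
  have hle : exp (-(sqrt E * ρ)) / (4 * π * ρ) ≤ exp (-(sqrt E * d)) / (4 * π * d) := by
    apply div_le_div₀ (exp_pos _).le
    · exact exp_le_exp.mpr (by nlinarith [Real.sqrt_nonneg E])
    · positivity
    · nlinarith [Real.pi_pos]
  constructor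
  · linarith
  · linarith
end
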